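/- Let ℓ be a Lyndon word, let t, s ≥ 1, let w₁, …, w_t and v₁, …, v_s be nonempty words, and let p₁, …, p_t, q₁, …, q_s be nonnegative integers with p_i > 0 and q_j > 0 for all i, j > 1. Assume, for every index i: (a) ℓ is not a factor of w_i nor of v_i; (b) every nonempty suffix of w_i and of v_i is strictly greater than ℓ. Define w = ℓ^{p₁}w₁ℓ^{p₂}w₂⋯ℓ^{p_t}w_t, w' = ℓ^{p₁+1}w₁ℓ^{p₂+1}w₂⋯ℓ^{p_t+1}w_t, v = ℓ^{q₁}v₁ℓ^{q₂}v₂⋯ℓ^{q_s}v_s, and v' = ℓ^{q₁+1}v₁ℓ^{q₂+1}v₂⋯ℓ^{q_s+1}v_s. Then w > v if and only if w' > v'. -/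

import Mathlib

variable {I : Type*} [LinearOrder I]

/-- A word is *Lyndon* if it is nonempty and lexicographically strictly smaller
than each of its proper nonempty suffixes. -/
def IsLyndon (w : List I) : Prop :=
  w ≠ [] ∧ ∀ u v : List I, w = u ++ v → u ≠ [] → v ≠ [] → w < v

/-- The word `ℓ^{p₁}w₁ℓ^{p₂}w₂⋯ℓ^{p_t}w_t` built from a list of pairs
`(pᵢ, wᵢ)`, where `ℓ^p` denotes `p` concatenated copies of `ℓ`. -/
def chunkWord (l : List I) (pw : List (ℕ × List I)) : List I :=
  (pw.map fun x => (List.replicate x.1 l).flatten ++ x.2).flatten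

section Helpers

lemma lex_iff {x y : List I} : x < y ↔ List.Lex (· < ·) x y := Iff.rfl

lemma lex_cancel (a : List I) {b c : List I} : a ++ b < a ++ c ↔ b < c := by
  induction a with
  | nil => rfl
  | cons x a ih =>
    simp only [List.cons_append, lex_iff]
    rw [List.lex_cons_iff]
    exact ih

lemma app_cancel_eq (a : List I) {b c : List I} : a ++ b = a ++ c ↔ b = c :=
  (List.append_right_injective a).eq_iff

lemma nil_lt {c : List I} (h : c ≠ []) : ([] : List I) < c := by
  cases c with
  | nil => exact absurd rfl h
  | cons x t => exact List.nil_lt_cons x t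

lemma lt_strong {x y : List I} (h : x < y) (hp : ¬ x <+: y) :
    ∀ z z' : List I, x ++ z < y ++ z' := by
  rw [lex_iff] at h
  induction h with
  | nil => exact absurd List.nil_prefix hp
  | @cons a l₁ l₂ h ih =>
    intro z z'
    have hp' : ¬ l₁ <+: l₂ := fun hh => hp (List.cons_prefix_cons.mpr ⟨rfl, hh⟩)
    exact List.Lex.cons (ih hp' z z')
  | @rel a l₁ b l₂ hab =>
    intro z z'
    exact List.Lex.rel hab

lemma chunk_cons (l : List I) (p : ℕ) (w : List I) (t : List (ℕ × List I)) :
    chunkWord l ((p, w) :: t) = (List.replicate p l).flatten ++ (w ++ chunkWord l t) := by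
  simp [chunkWord, List.append_assoc]

lemma chunk_ne (l : List I) (p : ℕ) (w : List I) (t : List (ℕ × List I)) (hw : w ≠ []) :
    chunkWord l ((p, w) :: t) ≠ [] := by
  rw [chunk_cons]
  simp [hw]

lemma rep_succ (l : List I) (d : ℕ) :
    (List.replicate (d + 1) l).flatten = l ++ (List.replicate d l).flatten := by
  simp [List.replicate_succ]

lemma small_exp {l w : List I} (hlw : l < w) (hnp : ¬ l <+: w) {p q : ℕ} (hpq : p < q)
    (X A : List I) :
    (List.replicate q l).flatten ++ X < (List.replicate p l).flatten ++ (w ++ A) := by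
  obtain ⟨d, rfl⟩ : ∃ d, q = p + (d + 1) := ⟨q - p - 1, by omega⟩
  rw [List.replicate_add, List.flatten_append, List.append_assoc, lex_cancel, rep_succ,
    List.append_assoc]
  exact lt_strong hlw hnp _ _

lemma chunk_shape (l : List I) (t : List (ℕ × List I)) (h : ∀ x ∈ t, 0 < x.1) :
    chunkWord l t = [] ∨ ∃ Z, chunkWord l t = l ++ Z := by
  cases t with
  | nil => left; rfl
  | cons a t =>
    right
    obtain ⟨p, w⟩ := a
    have hp : 0 < p := h (p, w) (List.mem_cons_self)
    obtain ⟨d, rfl⟩ : ∃ d, p = d + 1 := ⟨p - 1, by omega⟩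
    exact ⟨_, by rw [chunk_cons, rep_succ, List.append_assoc]⟩

lemma cross {l w v : List I} (hlt : w < v)
    (hfac : ¬ ∃ a b : List I, v = a ++ l ++ b)
    (hsuf : ∀ s : List I, s ≠ [] → s <:+ v → l < s)
    {W : List I} (hW : W = [] ∨ ∃ Z, W = l ++ Z) (V : List I) :
    w ++ W < v ++ V := by
  by_cases hpre : w <+: v
  · obtain ⟨c, rfl⟩ := hpre
    have hc : c ≠ [] := by
      rintro rfl
      rw [List.append_nil] at hlt
      exact lt_irrefl _ hlt
    have hlc : l < c := hsuf c hc ⟨w, rfl⟩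
    have hnp : ¬ l <+: c := by
      rintro ⟨b, rfl⟩
      exact hfac ⟨w, b, by simp⟩
    rw [List.append_assoc, lex_cancel]
    rcases hW with rfl | ⟨Z, rfl⟩
    · cases c with
      | nil => exact absurd rfl hc
      | cons x c => exact List.nil_lt_cons _ _
    · exact lt_strong hlc hnp Z V
  · exact lt_strong hlt hpre W V

lemma main (l : List I) (pw : List (ℕ × List I)) :
    ∀ qv : List (ℕ × List I),
    (∀ x ∈ pw, x.2 ≠ []) → (∀ x ∈ pw, ¬ ∃ a b : List I, x.2 = a ++ l ++ b) →
    (∀ x ∈ pw, ∀ s : List I, s ≠ [] → s <:+ x.2 → l < s) → (∀ x ∈ pw.tail, 0 < x.1) →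
    (∀ x ∈ qv, x.2 ≠ []) → (∀ x ∈ qv, ¬ ∃ a b : List I, x.2 = a ++ l ++ b) →
    (∀ x ∈ qv, ∀ s : List I, s ≠ [] → s <:+ x.2 → l < s) → (∀ x ∈ qv.tail, 0 < x.1) →
    ((chunkWord l pw < chunkWord l qv ↔
        chunkWord l (pw.map fun x => (x.1 + 1, x.2)) <
          chunkWord l (qv.map fun x => (x.1 + 1, x.2))) ∧
     (chunkWord l pw = chunkWord l qv ↔
        chunkWord l (pw.map fun x => (x.1 + 1, x.2)) =
          chunkWord l (qv.map fun x => (x.1 + 1, x.2)))) := by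
  induction pw with
  | nil =>
    intro qv _ _ _ _ hv1 _ _ _
    cases qv with
    | nil => simp [chunkWord]
    | cons b qv =>
      obtain ⟨q, v⟩ := b
      have hv : v ≠ [] := hv1 _ (List.mem_cons_self)
      have e : chunkWord l ([] : List (ℕ × List I)) = [] := rfl
      simp only [List.map_nil, List.map_cons, e]
      constructor
      · exact iff_of_true (nil_lt (chunk_ne l q v qv hv))
          (nil_lt (chunk_ne l (q + 1) v (qv.map fun x => (x.1 + 1, x.2)) hv))
      · exact iff_of_false (fun h => chunk_ne l q v qv hv h.symm)
          (fun h => chunk_ne l (q + 1) v (qv.map fun x => (x.1 + 1, x.2)) hv h.symm)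
  | cons a pw ih =>
    intro qv hw1 hw2 hw3 hw4 hv1 hv2 hv3 hv4
    obtain ⟨p, w⟩ := a
    have hwne : w ≠ [] := hw1 _ (List.mem_cons_self)
    cases qv with
    | nil =>
      have e : chunkWord l ([] : List (ℕ × List I)) = [] := rfl
      simp only [List.map_nil, List.map_cons, e]
      constructor
      · exact iff_of_false (fun h => List.not_lex_nil (lex_iff.mp h))
          (fun h => List.not_lex_nil (lex_iff.mp h))
      · exact iff_of_false (chunk_ne l p w pw hwne)
          (chunk_ne l (p + 1) w (pw.map fun x => (x.1 + 1, x.2)) hwne)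
    | cons b qv =>
      obtain ⟨q, v⟩ := b
      have hvne : v ≠ [] := hv1 _ (List.mem_cons_self)
      have hlw : l < w := hw3 _ (List.mem_cons_self) w hwne (List.suffix_refl w)
      have hlv : l < v := hv3 _ (List.mem_cons_self) v hvne (List.suffix_refl v)
      have hnpw : ¬ l <+: w := by
        rintro ⟨c, hc⟩
        exact hw2 _ (List.mem_cons_self) ⟨[], c, by simp [← hc]⟩
      have hnpv : ¬ l <+: v := by
        rintro ⟨c, hc⟩
        exact hv2 _ (List.mem_cons_self) ⟨[], c, by simp [← hc]⟩
      have hw4' : ∀ x ∈ pw, 0 < x.1 := fun x hx => hw4 x hx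
      have hv4' : ∀ x ∈ qv, 0 < x.1 := fun x hx => hv4 x hx
      simp only [List.map_cons]
      rcases lt_trichotomy p q with hpq | rfl | hpq
      · have H1 : chunkWord l ((q, v) :: qv) < chunkWord l ((p, w) :: pw) := by
          rw [chunk_cons, chunk_cons]
          exact small_exp hlw hnpw hpq _ _
        have H2 : chunkWord l ((q + 1, v) :: qv.map fun x => (x.1 + 1, x.2)) <
            chunkWord l ((p + 1, w) :: pw.map fun x => (x.1 + 1, x.2)) := by
          rw [chunk_cons, chunk_cons]
          exact small_exp hlw hnpw (by omega) _ _
        exact ⟨iff_of_false (lt_asymm H1) (lt_asymm H2),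
          iff_of_false (fun h => lt_irrefl _ (h ▸ H1)) (fun h => lt_irrefl _ (h ▸ H2))⟩
      · rcases lt_trichotomy w v with hwv | rfl | hwv
        · have H1 : chunkWord l ((p, w) :: pw) < chunkWord l ((p, v) :: qv) := by
            rw [chunk_cons, chunk_cons, lex_cancel]
            exact cross hwv (hv2 _ (List.mem_cons_self)) (hv3 _ (List.mem_cons_self))
              (chunk_shape l pw hw4') _
          have H2 : chunkWord l ((p + 1, w) :: pw.map fun x => (x.1 + 1, x.2)) <
              chunkWord l ((p + 1, v) :: qv.map fun x => (x.1 + 1, x.2)) := by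
            rw [chunk_cons, chunk_cons, lex_cancel]
            exact cross hwv (hv2 _ (List.mem_cons_self)) (hv3 _ (List.mem_cons_self))
              (chunk_shape l _ (by rintro x hx; rw [List.mem_map] at hx; obtain ⟨y, -, rfl⟩ := hx; exact Nat.succ_pos _)) _
          exact ⟨iff_of_true H1 H2, iff_of_false (ne_of_lt H1) (ne_of_lt H2)⟩
        · obtain ⟨ih1, ih2⟩ := ih qv
            (fun x hx => hw1 x (List.mem_cons_of_mem _ hx))
            (fun x hx => hw2 x (List.mem_cons_of_mem _ hx))
            (fun x hx => hw3 x (List.mem_cons_of_mem _ hx))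
            (fun x hx => hw4' x (List.mem_of_mem_tail hx))
            (fun x hx => hv1 x (List.mem_cons_of_mem _ hx))
            (fun x hx => hv2 x (List.mem_cons_of_mem _ hx))
            (fun x hx => hv3 x (List.mem_cons_of_mem _ hx))
            (fun x hx => hv4' x (List.mem_of_mem_tail hx))
          constructor
          · rw [chunk_cons, chunk_cons, chunk_cons, chunk_cons,
              lex_cancel, lex_cancel, lex_cancel, lex_cancel]
            exact ih1
          · rw [chunk_cons, chunk_cons, chunk_cons, chunk_cons,
              app_cancel_eq, app_cancel_eq, app_cancel_eq, app_cancel_eq]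
            exact ih2
        · have H1 : chunkWord l ((p, v) :: qv) < chunkWord l ((p, w) :: pw) := by
            rw [chunk_cons, chunk_cons, lex_cancel]
            exact cross hwv (hw2 _ (List.mem_cons_self)) (hw3 _ (List.mem_cons_self))
              (chunk_shape l qv hv4') _
          have H2 : chunkWord l ((p + 1, v) :: qv.map fun x => (x.1 + 1, x.2)) <
              chunkWord l ((p + 1, w) :: pw.map fun x => (x.1 + 1, x.2)) := by
            rw [chunk_cons, chunk_cons, lex_cancel]
            exact cross hwv (hw2 _ (List.mem_cons_self)) (hw3 _ (List.mem_cons_self))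
              (chunk_shape l _ (by rintro x hx; rw [List.mem_map] at hx; obtain ⟨y, -, rfl⟩ := hx; exact Nat.succ_pos _)) _
          exact ⟨iff_of_false (lt_asymm H1) (lt_asymm H2),
            iff_of_false (fun h => lt_irrefl _ (h ▸ H1)) (fun h => lt_irrefl _ (h ▸ H2))⟩
      · have H1 : chunkWord l ((p, w) :: pw) < chunkWord l ((q, v) :: qv) := by
          rw [chunk_cons, chunk_cons]
          exact small_exp hlv hnpv hpq _ _
        have H2 : chunkWord l ((p + 1, w) :: pw.map fun x => (x.1 + 1, x.2)) <
            chunkWord l ((q + 1, v) :: qv.map fun x => (x.1 + 1, x.2)) := by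
          rw [chunk_cons, chunk_cons]
          exact small_exp hlv hnpv (by omega) _ _
        exact ⟨iff_of_true H1 H2, iff_of_false (ne_of_lt H1) (ne_of_lt H2)⟩

end Helpers

/-- Let `ℓ` be Lyndon, `w = ℓ^{p₁}w₁⋯ℓ^{p_t}w_t`, `v = ℓ^{q₁}v₁⋯ℓ^{q_s}v_s`
(`t, s ≥ 1`, `wᵢ`, `vⱼ` nonempty, `pᵢ, qⱼ > 0` for `i, j > 1`), where `ℓ` is
not a factor of any `wᵢ`, `vⱼ` and every nonempty suffix of each `wᵢ`, `vⱼ`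
is `> ℓ`.  Let `w'`, `v'` be obtained by increasing every exponent by `1`.
Then `w > v ↔ w' > v'`. -/


theorem chunk_lift_gt_iff (l : List I) (hl : IsLyndon l)
    (pw qv : List (ℕ × List I)) (hpw : pw ≠ []) (hqv : qv ≠ [])
    (hw_ne : ∀ x ∈ pw, x.2 ≠ []) (hv_ne : ∀ x ∈ qv, x.2 ≠ [])
    (hw_fac : ∀ x ∈ pw, ¬ ∃ a b : List I, x.2 = a ++ l ++ b)
    (hv_fac : ∀ x ∈ qv, ¬ ∃ a b : List I, x.2 = a ++ l ++ b)
    (hw_suf : ∀ x ∈ pw, ∀ s : List I, s ≠ [] → s <:+ x.2 → l < s)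
    (hv_suf : ∀ x ∈ qv, ∀ s : List I, s ≠ [] → s <:+ x.2 → l < s)
    (hw_pos : ∀ x ∈ pw.tail, 0 < x.1) (hv_pos : ∀ x ∈ qv.tail, 0 < x.1) :
    chunkWord l qv < chunkWord l pw ↔
      chunkWord l (qv.map fun x => (x.1 + 1, x.2)) <
        chunkWord l (pw.map fun x => (x.1 + 1, x.2)) := by
  exact (main l qv pw hv_ne hv_fac hv_suf hv_pos hw_ne hw_fac hw_suf hw_pos).1
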